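/- Let n ∈ ℕ, r : Fin n → ℤ, and W ∈ MvPolynomial (Fin n) ℂ have R-charge 2 under r. Define the scalar potential V(z) := ∑ i, ‖(pderiv i W)(z)‖². Then V is invariant under the unitary R-symmetry action: for every λ ∈ ℂ with ‖λ‖ = 1 and every z : Fin n → ℂ, V(fun i => λ^(r i) * z i) = V(z). -/

import Mathlib

open MvPolynomial

lemma zpow_finset_sum {α : Type*} (l : ℂ) (hl : l ≠ 0) (s : Finset α) (f : α → ℤ) :
    l ^ (∑ a ∈ s, f a) = ∏ a ∈ s, l ^ (f a) := by
  classical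
  induction s using Finset.induction_on with
  | empty => simp
  | insert _ _ h ih => rw [Finset.sum_insert h, Finset.prod_insert h, zpow_add₀ hl, ih]

lemma eval_scaled_monomial (n : ℕ) (r : Fin n → ℤ) (l : ℂ) (hl : l ≠ 0)
    (z : Fin n → ℂ) (m : Fin n →₀ ℕ) (a : ℂ) :
    MvPolynomial.eval (fun j => l ^ (r j) * z j) (monomial m a) =
      l ^ (∑ j, r j * (m j : ℤ)) * MvPolynomial.eval z (monomial m a) := by
  rw [eval_monomial, eval_monomial]
  rw [Finsupp.prod_fintype _ _ (fun i => pow_zero _),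
      Finsupp.prod_fintype _ _ (fun i => pow_zero _)]
  rw [zpow_finset_sum l hl]
  rw [mul_left_comm, ← Finset.prod_mul_distrib]
  congr 1
  apply Finset.prod_congr rfl
  intro j _
  rw [mul_pow, ← zpow_natCast (l ^ (r j)), ← zpow_mul]

lemma eval_scaled_charge (n : ℕ) (r : Fin n → ℤ) (l : ℂ) (hl : l ≠ 0)
    (z : Fin n → ℂ) (P : MvPolynomial (Fin n) ℂ) (c : ℤ)
    (hP : ∀ m ∈ P.support, ∑ i, r i * (m i : ℤ) = c) :
    MvPolynomial.eval (fun j => l ^ (r j) * z j) P = l ^ c * MvPolynomial.eval z P := by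
  conv_lhs => rw [P.as_sum]
  conv_rhs => rw [P.as_sum]
  rw [map_sum, map_sum, Finset.mul_sum]
  apply Finset.sum_congr rfl
  intro m hm
  rw [eval_scaled_monomial n r l hl, hP m hm]

theorem rcharge_two_potential_invariant (n : ℕ) (r : Fin n → ℤ)
    (W : MvPolynomial (Fin n) ℂ)
    (hW : ∀ m ∈ W.support, ∑ i, r i * (m i : ℤ) = 2)
    (l : ℂ) (hl : ‖l‖ = 1) (z : Fin n → ℂ) :
    ∑ i, ‖MvPolynomial.eval (fun j => l ^ (r j) * z j) (MvPolynomial.pderiv i W)‖ ^ 2 =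
      ∑ i, ‖MvPolynomial.eval z (MvPolynomial.pderiv i W)‖ ^ 2 := by
  have hl0 : l ≠ 0 := by intro h; rw [h] at hl; simp at hl
  apply Finset.sum_congr rfl
  intro i _
  have key : MvPolynomial.eval (fun j => l ^ (r j) * z j) (pderiv i W) =
      l ^ (2 - r i) * MvPolynomial.eval z (pderiv i W) := by
    apply eval_scaled_charge n r l hl0 z _ (2 - r i)
    intro m hm
    -- m is in support of pderiv i W
    have : ∃ m' ∈ W.support, m' i ≠ 0 ∧ m = m' - Finsupp.single i 1 := by
      classical
      by_contra hcon
      push_neg at hcon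
      have hmem := hm
      rw [MvPolynomial.mem_support_iff] at hmem
      apply hmem
      rw [show W = ∑ m' ∈ W.support, monomial m' (W.coeff m') from W.as_sum, map_sum]
      rw [MvPolynomial.coeff_sum]
      apply Finset.sum_eq_zero
      intro m' hm'
      rw [pderiv_monomial, coeff_monomial]
      by_cases h0 : m' i = 0
      · simp [h0]
      · rw [if_neg]
        intro heq
        exact hcon m' hm' h0 heq.symm
    obtain ⟨m', hm', hi0, rfl⟩ := this
    have hchar := hW m' hm'
    have hsub : ∀ j, (((m' - Finsupp.single i 1 : Fin n →₀ ℕ)) j : ℤ) =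
        (m' j : ℤ) - (if j = i then 1 else 0) := by
      intro j
      rw [Finsupp.tsub_apply, Finsupp.single_apply]
      by_cases h : j = i
      · subst h
        have h1 : 1 ≤ m' j := Nat.one_le_iff_ne_zero.mpr hi0
        simp only [if_true, eq_self_iff_true]
        exact Nat.cast_sub h1
      · simp [h, Ne.symm h]
    calc ∑ j, r j * (((m' - Finsupp.single i 1 : Fin n →₀ ℕ)) j : ℤ)
        = ∑ j, (r j * (m' j : ℤ) - r j * (if j = i then 1 else 0)) := by
          apply Finset.sum_congr rfl; intro j _; rw [hsub j]; ring
      _ = (∑ j, r j * (m' j : ℤ)) - ∑ j, r j * (if j = i then 1 else 0) := by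
          rw [Finset.sum_sub_distrib]
      _ = 2 - r i := by
          rw [hchar]; congr 1; simp [Finset.sum_ite_eq', mul_ite]
  rw [key, norm_mul, norm_zpow, hl, one_zpow, one_mul]
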